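/- If π_f admits a global continuous section, then f admits a global continuous section s : W → C whose image s(W) is contractible in C. -/

import Mathlib

/-- If `π_f` admits a global continuous section, then `f` admits a global
continuous section `s : W → C` whose image is contractible in `C`. -/
theorem global_section_of_pi_f_section
    {C W : Type*} [TopologicalSpace C] [TopologicalSpace W]
    [PathConnectedSpace C] [PathConnectedSpace W]
    (f : C → W) (hf : Continuous f) (hsurj : Function.Surjective f)
    (σ : C × W → C(unitInterval, C)) (hσ : Continuous σ)
    (hσ0 : ∀ p : C × W, σ p 0 = p.1) (hσ1 : ∀ p : C × W, f (σ p 1) = p.2) :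
    ∃ s : W → C, Continuous s ∧ (∀ w, f (s w) = w) ∧
      ∃ (c₀ : C) (K : W × unitInterval → C), Continuous K ∧
        (∀ w, K (w, 0) = s w) ∧ (∀ w, K (w, 1) = c₀) := by
  obtain ⟨c₀⟩ : Nonempty C := inferInstance
  refine ⟨fun w => σ (c₀, w) 1, ?_, fun w => hσ1 (c₀, w), c₀,
    fun p => σ (c₀, p.1) (unitInterval.symm p.2), ?_, fun w => by simp, fun w => by
      simpa using hσ0 (c₀, w)⟩
  · exact continuous_eval.comp
      ((hσ.comp (Continuous.prodMk_right c₀)).prodMk continuous_const)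
  · exact continuous_eval.comp
      ((hσ.comp ((Continuous.prodMk_right c₀).comp continuous_fst)).prodMk
        (unitInterval.continuous_symm.comp continuous_snd))
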